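/- arXiv:2406.10945 — 2 statements merged into one kernel-verified Lean document; each statement's English description precedes it below -/
import Mathlib

section
/- Let Φκ(Z) = Σ_{i=1}^κ λ_i(Z) on Sym(p). For every Z ∈ Sym(p) and every direction H ∈ Sym(p), the directional derivative exists and equals Φκ'(Z;H) = Σ_{l=1}^{r−1} tr(Q_{θ_l}ᵀ H Q_{θ_l}) + Φ_{l_κ(Z)}(Q_{θ_r}ᵀ H Q_{θ_r}), where Q ∈ O(p) diagonalizes Z with eigenvalues in nonincreasing order. -/
open Matrix Filter Topology

/-- `Φκ(Z)`: the sum of the `κ` largest eigenvalues of a symmetric matrix `Z`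
(and `0` on non-Hermitian matrices). -/
noncomputable def kyFanEig (κ : ℕ) {p : ℕ} (Z : Matrix (Fin p) (Fin p) ℝ) : ℝ :=
  if hZ : Z.IsHermitian then
    ∑ i ∈ Finset.univ.filter (fun i : Fin p => (i : ℕ) < κ),
      (hZ.eigenvalues ∘ ⇑(Tuple.sort hZ.eigenvalues)) i.rev
  else 0

namespace KFaux

variable {p : ℕ}

/-- The set of orthogonal projections of rank `κ` (as symmetric idempotents of trace `κ`). -/
def projSet (κ p : ℕ) : Set (Matrix (Fin p) (Fin p) ℝ) :=
  {P | P.IsSymm ∧ P * P = P ∧ P.trace = (κ : ℝ)}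

noncomputable def projMax (κ : ℕ) {p : ℕ} (X : Matrix (Fin p) (Fin p) ℝ) : ℝ :=
  sSup ((fun P => (X * P).trace) '' projSet κ p)

lemma card_filter_lt (hκp : κ ≤ p) :
    (Finset.univ.filter (fun i : Fin p => (i : ℕ) < κ)).card = κ := by
  have : (Finset.univ.filter (fun i : Fin p => (i : ℕ) < κ))
      = (Finset.range κ).attachFin (fun m hm => lt_of_lt_of_le (Finset.mem_range.mp hm) hκp) := by
    ext i
    simp [Finset.mem_attachFin]
  rw [this, Finset.card_attachFin, Finset.card_range]

lemma trace_eq_sum (M : Matrix (Fin p) (Fin p) ℝ) : M.trace = ∑ i, M i i := rfl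

lemma proj_diag_sq {P : Matrix (Fin p) (Fin p) ℝ} (hs : P.IsSymm) (hi : P * P = P)
    (i : Fin p) : P i i = ∑ j, (P i j) ^ 2 := by
  conv_lhs => rw [← hi]
  rw [Matrix.mul_apply]
  refine Finset.sum_congr rfl fun j _ => ?_
  rw [hs.apply i j]; ring

lemma proj_diag_nonneg {P : Matrix (Fin p) (Fin p) ℝ} (hs : P.IsSymm) (hi : P * P = P)
    (i : Fin p) : 0 ≤ P i i := by
  rw [proj_diag_sq hs hi]
  exact Finset.sum_nonneg fun j _ => sq_nonneg _

lemma proj_diag_le_one {P : Matrix (Fin p) (Fin p) ℝ} (hs : P.IsSymm) (hi : P * P = P)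
    (i : Fin p) : P i i ≤ 1 := by
  nlinarith [proj_diag_sq hs hi i, Finset.single_le_sum (f := fun j => (P i j)^2)
    (fun j _ => sq_nonneg _) (Finset.mem_univ i)]

lemma proj_entry_abs_le_one {P : Matrix (Fin p) (Fin p) ℝ} (hs : P.IsSymm) (hi : P * P = P)
    (i j : Fin p) : |P i j| ≤ 1 := by
  have h1 : (P i j)^2 ≤ P i i :=
    (proj_diag_sq hs hi i) ▸ Finset.single_le_sum (f := fun j => (P i j)^2)
      (fun j _ => sq_nonneg _) (Finset.mem_univ j)
  have h2 := proj_diag_le_one hs hi i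
  rw [abs_le]; constructor <;> nlinarith

lemma proj_row_eq_zero {P : Matrix (Fin p) (Fin p) ℝ} (hs : P.IsSymm) (hi : P * P = P)
    {i : Fin p} (h : P i i = 0 ∨ P i i = 1) {j : Fin p} (hj : j ≠ i) : P i j = 0 := by
  have hsum : ∑ j, (P i j) ^ 2 = P i i := (proj_diag_sq hs hi i).symm
  have hsplit : (P i i)^2 + ∑ j ∈ Finset.univ.erase i, (P i j)^2 = P i i := by
    conv_rhs => rw [← hsum]
    rw [← Finset.add_sum_erase _ _ (Finset.mem_univ i)]
  have hzero : ∑ j ∈ Finset.univ.erase i, (P i j)^2 = 0 := by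
    rcases h with h | h <;> rw [h] at hsplit <;> nlinarith
  have := (Finset.sum_eq_zero_iff_of_nonneg (fun j _ => sq_nonneg (P i j))).mp hzero j
    (Finset.mem_erase.mpr ⟨hj, Finset.mem_univ j⟩)
  nlinarith [this, sq_nonneg (P i j)]


section Key
variable {κ : ℕ}

lemma key_deficit (hκ1 : 1 ≤ κ) (hκp : κ ≤ p) {ρ d : Fin p → ℝ}
    (hsum : ∑ i, d i = (κ : ℝ)) :
    (∑ i ∈ Finset.univ.filter (fun i : Fin p => (i : ℕ) < κ), ρ i) - ∑ i, ρ i * d i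
      = (∑ i ∈ Finset.univ.filter (fun i : Fin p => (i : ℕ) < κ),
          (ρ i - ρ (⟨κ - 1, Nat.sub_one_lt_of_le hκ1 hκp⟩ : Fin p)) * (1 - d i))
        + ∑ i ∈ Finset.univ.filter (fun i : Fin p => ¬ ((i : ℕ) < κ)),
            (ρ (⟨κ - 1, Nat.sub_one_lt_of_le hκ1 hκp⟩ : Fin p) - ρ i) * d i := by
  set c := ρ (⟨κ - 1, Nat.sub_one_lt_of_le hκ1 hκp⟩ : Fin p) with hc
  set S := Finset.univ.filter (fun i : Fin p => (i : ℕ) < κ) with hS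
  have hsplitd : (∑ i ∈ S, d i) + ∑ i ∈ Finset.univ.filter (fun i : Fin p => ¬ ((i:ℕ) < κ)), d i
      = (κ : ℝ) := by rw [Finset.sum_filter_add_sum_filter_not]; exact hsum
  have hsplitrd : (∑ i ∈ S, ρ i * d i)
      + ∑ i ∈ Finset.univ.filter (fun i : Fin p => ¬ ((i:ℕ) < κ)), ρ i * d i
      = ∑ i, ρ i * d i := Finset.sum_filter_add_sum_filter_not _ _ _
  have hcard : ((S.card : ℝ)) = (κ : ℝ) := by rw [hS, card_filter_lt hκp]
  have e1 : ∑ i ∈ S, (ρ i - c) * (1 - d i)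
      = (∑ i ∈ S, ρ i) - (∑ i ∈ S, ρ i * d i) - c * S.card + c * ∑ i ∈ S, d i := by
    rw [Finset.mul_sum]
    rw [show c * (S.card : ℝ) = ∑ _i ∈ S, c by rw [Finset.sum_const, nsmul_eq_mul, mul_comm]]
    rw [← Finset.sum_sub_distrib, ← Finset.sum_sub_distrib, ← Finset.sum_add_distrib]
    exact Finset.sum_congr rfl fun i _ => by ring
  have e2 : ∑ i ∈ Finset.univ.filter (fun i : Fin p => ¬ ((i:ℕ) < κ)), (c - ρ i) * d i
      = c * (∑ i ∈ Finset.univ.filter (fun i : Fin p => ¬ ((i:ℕ) < κ)), d i)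
        - ∑ i ∈ Finset.univ.filter (fun i : Fin p => ¬ ((i:ℕ) < κ)), ρ i * d i := by
    rw [Finset.mul_sum, ← Finset.sum_sub_distrib]
    exact Finset.sum_congr rfl fun i _ => by ring
  have h3 : c * (∑ i ∈ S, d i)
      + c * (∑ i ∈ Finset.univ.filter (fun i : Fin p => ¬ ((i:ℕ) < κ)), d i) = c * κ := by
    rw [← mul_add, hsplitd]
  have h4 : c * ((S.card : ℝ)) = c * κ := by rw [hcard]
  rw [e1, e2]
  linarith [hsplitd, hsplitrd, h3, h4]

lemma mem_filter_lt_ge {i : Fin p} (hκ1 : 1 ≤ κ) (hκp : κ ≤ p) {ρ : Fin p → ℝ}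
    (hρ : Antitone ρ) (hi : (i : ℕ) < κ) :
    ρ (⟨κ - 1, Nat.sub_one_lt_of_le hκ1 hκp⟩ : Fin p) ≤ ρ i := by
  apply hρ
  show (i : ℕ) ≤ κ - 1
  omega

lemma not_mem_filter_le {i : Fin p} (hκ1 : 1 ≤ κ) (hκp : κ ≤ p) {ρ : Fin p → ℝ}
    (hρ : Antitone ρ) (hi : ¬ ((i : ℕ) < κ)) :
    ρ i ≤ ρ (⟨κ - 1, Nat.sub_one_lt_of_le hκ1 hκp⟩ : Fin p) := by
  apply hρ
  show (κ - 1 : ℕ) ≤ i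
  omega

lemma key_ineq (hκ1 : 1 ≤ κ) (hκp : κ ≤ p) {ρ d : Fin p → ℝ} (hρ : Antitone ρ)
    (hd0 : ∀ i, 0 ≤ d i) (hd1 : ∀ i, d i ≤ 1) (hsum : ∑ i, d i = (κ : ℝ)) :
    ∑ i, ρ i * d i ≤ ∑ i ∈ Finset.univ.filter (fun i : Fin p => (i : ℕ) < κ), ρ i := by
  have h := key_deficit hκ1 hκp (ρ := ρ) hsum
  have h1 : (0:ℝ) ≤ ∑ i ∈ Finset.univ.filter (fun i : Fin p => (i : ℕ) < κ),
      (ρ i - ρ (⟨κ - 1, Nat.sub_one_lt_of_le hκ1 hκp⟩ : Fin p)) * (1 - d i) :=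
    Finset.sum_nonneg fun i hi => mul_nonneg
      (by linarith [mem_filter_lt_ge hκ1 hκp hρ (Finset.mem_filter.mp hi).2])
      (by linarith [hd1 i])
  have h2 : (0:ℝ) ≤ ∑ i ∈ Finset.univ.filter (fun i : Fin p => ¬ ((i : ℕ) < κ)),
      (ρ (⟨κ - 1, Nat.sub_one_lt_of_le hκ1 hκp⟩ : Fin p) - ρ i) * d i :=
    Finset.sum_nonneg fun i hi => mul_nonneg
      (by linarith [not_mem_filter_le hκ1 hκp hρ (Finset.mem_filter.mp hi).2]) (hd0 i)
  linarith

lemma key_eq (hκ1 : 1 ≤ κ) (hκp : κ ≤ p) {ρ d : Fin p → ℝ} (hρ : Antitone ρ)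
    (hd0 : ∀ i, 0 ≤ d i) (hd1 : ∀ i, d i ≤ 1) (hsum : ∑ i, d i = (κ : ℝ))
    (heq : ∑ i, ρ i * d i
      = ∑ i ∈ Finset.univ.filter (fun i : Fin p => (i : ℕ) < κ), ρ i) (i : Fin p) :
    (ρ (⟨κ - 1, Nat.sub_one_lt_of_le hκ1 hκp⟩ : Fin p) < ρ i → d i = 1)
      ∧ (ρ i < ρ (⟨κ - 1, Nat.sub_one_lt_of_le hκ1 hκp⟩ : Fin p) → d i = 0) := by
  set c := ρ (⟨κ - 1, Nat.sub_one_lt_of_le hκ1 hκp⟩ : Fin p) with hc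
  have h := key_deficit hκ1 hκp (ρ := ρ) hsum
  have h1 : (0:ℝ) ≤ ∑ i ∈ Finset.univ.filter (fun i : Fin p => (i : ℕ) < κ),
      (ρ i - c) * (1 - d i) :=
    Finset.sum_nonneg fun i hi => mul_nonneg
      (by linarith [mem_filter_lt_ge hκ1 hκp hρ (Finset.mem_filter.mp hi).2])
      (by linarith [hd1 i])
  have h2 : (0:ℝ) ≤ ∑ i ∈ Finset.univ.filter (fun i : Fin p => ¬ ((i : ℕ) < κ)),
      (c - ρ i) * d i :=
    Finset.sum_nonneg fun i hi => mul_nonneg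
      (by linarith [not_mem_filter_le hκ1 hκp hρ (Finset.mem_filter.mp hi).2]) (hd0 i)
  have hz1 : ∑ i ∈ Finset.univ.filter (fun i : Fin p => (i : ℕ) < κ),
      (ρ i - c) * (1 - d i) = 0 := by linarith
  have hz2 : ∑ i ∈ Finset.univ.filter (fun i : Fin p => ¬ ((i : ℕ) < κ)),
      (c - ρ i) * d i = 0 := by linarith
  constructor
  · intro hlt
    have hiS : (i : ℕ) < κ := by
      by_contra hni
      exact absurd (not_mem_filter_le hκ1 hκp hρ hni) (by rw [← hc]; linarith)
    have := (Finset.sum_eq_zero_iff_of_nonneg (fun j hj => mul_nonneg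
      (by linarith [mem_filter_lt_ge hκ1 hκp hρ (Finset.mem_filter.mp hj).2])
      (by linarith [hd1 j]))).mp hz1 i (Finset.mem_filter.mpr ⟨Finset.mem_univ i, hiS⟩)
    rcases mul_eq_zero.mp this with h' | h'
    · linarith
    · linarith
  · intro hlt
    have hiS : ¬ ((i : ℕ) < κ) := by
      intro hni
      exact absurd (mem_filter_lt_ge hκ1 hκp hρ hni) (by rw [← hc]; linarith)
    have := (Finset.sum_eq_zero_iff_of_nonneg (fun j hj => mul_nonneg
      (by linarith [not_mem_filter_le hκ1 hκp hρ (Finset.mem_filter.mp hj).2])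
      (hd0 j))).mp hz2 i (Finset.mem_filter.mpr ⟨Finset.mem_univ i, hiS⟩)
    rcases mul_eq_zero.mp this with h' | h'
    · linarith
    · exact h'

end Key


section Traces
variable {κ : ℕ}

lemma trace_mul_eq (M N : Matrix (Fin p) (Fin p) ℝ) :
    (M * N).trace = ∑ i, ∑ j, M i j * N j i := by
  simp [Matrix.trace, Matrix.diag, Matrix.mul_apply]

lemma trace_diagonal_mul (v : Fin p → ℝ) (M : Matrix (Fin p) (Fin p) ℝ) :
    (Matrix.diagonal v * M).trace = ∑ i, v i * M i i := by
  simp [Matrix.trace, Matrix.diag, Matrix.diagonal_mul]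

lemma trace_mul_diagonal (v : Fin p → ℝ) (M : Matrix (Fin p) (Fin p) ℝ) :
    (M * Matrix.diagonal v).trace = ∑ i, M i i * v i := by
  simp [Matrix.trace, Matrix.diag, Matrix.mul_diagonal]

lemma trace_triple (A B C P : Matrix (Fin p) (Fin p) ℝ) :
    ((A * B * C) * P).trace = (B * (C * P * A)).trace :=
  calc ((A * B * C) * P).trace = (A * (B * (C * P))).trace := by simp only [Matrix.mul_assoc]
    _ = ((B * (C * P)) * A).trace := Matrix.trace_mul_comm _ _
    _ = (B * (C * P * A)).trace := by simp only [Matrix.mul_assoc]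

lemma conj_mem_projSet {R P : Matrix (Fin p) (Fin p) ℝ} (hR : Rᵀ * R = 1)
    (hP : P ∈ projSet κ p) : Rᵀ * P * R ∈ projSet κ p := by
  obtain ⟨hs, hi, ht⟩ := hP
  have hRR : R * Rᵀ = 1 := mul_eq_one_comm.mp hR
  refine ⟨?_, ?_, ?_⟩
  · show (Rᵀ * P * R)ᵀ = Rᵀ * P * R
    rw [Matrix.transpose_mul, Matrix.transpose_mul, Matrix.transpose_transpose, hs.eq,
      Matrix.mul_assoc]
  · have key : R * (Rᵀ * (P * R)) = P * R := by
      rw [← Matrix.mul_assoc, hRR, Matrix.one_mul]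
    calc (Rᵀ * P * R) * (Rᵀ * P * R) = Rᵀ * (P * (R * (Rᵀ * (P * R)))) := by
          simp only [Matrix.mul_assoc]
      _ = Rᵀ * (P * (P * R)) := by rw [key]
      _ = Rᵀ * (P * P * R) := by rw [Matrix.mul_assoc]
      _ = Rᵀ * (P * R) := by rw [hi]
      _ = Rᵀ * P * R := by rw [Matrix.mul_assoc]
  · rw [Matrix.trace_mul_comm, ← Matrix.mul_assoc, hRR, Matrix.one_mul, ht]

lemma trace_mul_abs_le {P : Matrix (Fin p) (Fin p) ℝ} (hP : P ∈ projSet κ p)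
    (M : Matrix (Fin p) (Fin p) ℝ) :
    |(M * P).trace| ≤ ∑ i, ∑ j, |M i j| := by
  obtain ⟨hs, hi, -⟩ := hP
  rw [trace_mul_eq]
  calc |∑ i, ∑ j, M i j * P j i| ≤ ∑ i, |∑ j, M i j * P j i| := Finset.abs_sum_le_sum_abs _ _
    _ ≤ ∑ i, ∑ j, |M i j * P j i| :=
        Finset.sum_le_sum fun i _ => Finset.abs_sum_le_sum_abs _ _
    _ ≤ ∑ i, ∑ j, |M i j| := by
        refine Finset.sum_le_sum fun i _ => Finset.sum_le_sum fun j _ => ?_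
        rw [abs_mul]
        calc |M i j| * |P j i| ≤ |M i j| * 1 :=
              mul_le_mul_of_nonneg_left (proj_entry_abs_le_one hs hi j i) (abs_nonneg _)
          _ = |M i j| := mul_one _

lemma diagonal_indicator_mem (hκp : κ ≤ p) :
    Matrix.diagonal (fun i : Fin p => if (i : ℕ) < κ then (1:ℝ) else 0) ∈ projSet κ p := by
  refine ⟨Matrix.isSymm_diagonal _, ?_, ?_⟩
  · rw [Matrix.diagonal_mul_diagonal]
    refine congrArg Matrix.diagonal (funext fun i => ?_)
    by_cases h : (i : ℕ) < κ <;> simp [h]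
  · rw [Matrix.trace_diagonal, Finset.sum_boole, card_filter_lt hκp]

lemma projSet_nonempty (hκp : κ ≤ p) : (projSet κ p).Nonempty :=
  ⟨_, diagonal_indicator_mem hκp⟩

lemma bddAbove_traces (X : Matrix (Fin p) (Fin p) ℝ) :
    BddAbove ((fun P => (X * P).trace) '' projSet κ p) := by
  refine ⟨∑ i, ∑ j, |X i j|, ?_⟩
  rintro x ⟨P, hP, rfl⟩
  exact le_trans (le_abs_self _) (trace_mul_abs_le hP X)

lemma le_projMax {P : Matrix (Fin p) (Fin p) ℝ} (hP : P ∈ projSet κ p)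
    (X : Matrix (Fin p) (Fin p) ℝ) : (X * P).trace ≤ projMax κ X :=
  le_csSup (bddAbove_traces X) ⟨P, hP, rfl⟩

/-- upper bound for the trace against any projection given an ordered eigendecomposition. -/
lemma trace_le_of_decomp {R : Matrix (Fin p) (Fin p) ℝ} {ρ : Fin p → ℝ}
    (hκ1 : 1 ≤ κ) (hκp : κ ≤ p) (hR : Rᵀ * R = 1) (hρ : Antitone ρ)
    {P : Matrix (Fin p) (Fin p) ℝ} (hP : P ∈ projSet κ p) :
    ((R * Matrix.diagonal ρ * Rᵀ * P).trace)
      ≤ ∑ i ∈ Finset.univ.filter (fun i : Fin p => (i : ℕ) < κ), ρ i := by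
  have hP' : Rᵀ * P * R ∈ projSet κ p := conj_mem_projSet hR hP
  obtain ⟨hs', hi', ht'⟩ := hP'
  have h1 : ((R * Matrix.diagonal ρ * Rᵀ) * P).trace
      = ∑ i, ρ i * (Rᵀ * P * R) i i := by
    rw [trace_triple]
    exact trace_diagonal_mul ρ _
  rw [h1]
  exact key_ineq hκ1 hκp hρ (fun i => proj_diag_nonneg hs' hi' i)
    (fun i => proj_diag_le_one hs' hi' i)
    (by rw [← ht']; rfl)

lemma trace_attained_of_decomp {R : Matrix (Fin p) (Fin p) ℝ} {ρ : Fin p → ℝ}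
    (hκp : κ ≤ p) (hR : Rᵀ * R = 1) :
    ∃ P ∈ projSet κ p, ((R * Matrix.diagonal ρ * Rᵀ * P).trace)
      = ∑ i ∈ Finset.univ.filter (fun i : Fin p => (i : ℕ) < κ), ρ i := by
  have hRR : R * Rᵀ = 1 := mul_eq_one_comm.mp hR
  set D₀ := Matrix.diagonal (fun i : Fin p => if (i : ℕ) < κ then (1:ℝ) else 0) with hD₀
  refine ⟨R * D₀ * Rᵀ, ?_, ?_⟩
  · have := conj_mem_projSet (R := Rᵀ) (by rw [Matrix.transpose_transpose]; exact hRR)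
      (diagonal_indicator_mem hκp)
    rwa [Matrix.transpose_transpose] at this
  · have e : Rᵀ * (R * D₀ * Rᵀ) = D₀ * Rᵀ := by
      rw [← Matrix.mul_assoc, ← Matrix.mul_assoc, hR, Matrix.one_mul]
    have h1 : (R * Matrix.diagonal ρ * Rᵀ) * (R * D₀ * Rᵀ)
        = R * (Matrix.diagonal ρ * D₀) * Rᵀ := by
      rw [Matrix.mul_assoc (R * Matrix.diagonal ρ) Rᵀ (R * D₀ * Rᵀ), e]
      simp only [Matrix.mul_assoc]
    rw [h1, Matrix.trace_mul_comm, ← Matrix.mul_assoc, hR, Matrix.one_mul, hD₀,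
      Matrix.diagonal_mul_diagonal, Matrix.trace_diagonal]
    rw [show (fun i : Fin p => ρ i * (if (i:ℕ) < κ then (1:ℝ) else 0))
        = fun i : Fin p => if (i:ℕ) < κ then ρ i else 0 from funext fun i => by
          by_cases h : (i : ℕ) < κ <;> simp [h]]
    rw [Finset.sum_ite, Finset.sum_const_zero, add_zero]

lemma projMax_eq_of_decomp {R : Matrix (Fin p) (Fin p) ℝ} {ρ : Fin p → ℝ}
    (hκ1 : 1 ≤ κ) (hκp : κ ≤ p) (hR : Rᵀ * R = 1) (hρ : Antitone ρ) :
    projMax κ (R * Matrix.diagonal ρ * Rᵀ)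
      = ∑ i ∈ Finset.univ.filter (fun i : Fin p => (i : ℕ) < κ), ρ i := by
  obtain ⟨P, hP, hPt⟩ := trace_attained_of_decomp (ρ := ρ) hκp hR
  refine IsGreatest.csSup_eq ⟨⟨P, hP, hPt⟩, ?_⟩
  rintro x ⟨P', hP', rfl⟩
  exact trace_le_of_decomp hκ1 hκp hR hρ hP'

lemma projMax_sub_le (hκp : κ ≤ p) (X Y : Matrix (Fin p) (Fin p) ℝ) :
    projMax κ X ≤ projMax κ Y + ∑ i, ∑ j, |X i j - Y i j| := by
  refine csSup_le (Set.Nonempty.image _ (projSet_nonempty hκp)) ?_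
  rintro x ⟨P, hP, rfl⟩
  have h1 : (X * P).trace = (Y * P).trace + ((X - Y) * P).trace := by
    rw [← Matrix.trace_add, ← Matrix.add_mul, add_sub_cancel]
  dsimp only
  rw [h1]
  have h2 : ((X - Y) * P).trace ≤ ∑ i, ∑ j, |X i j - Y i j| := by
    refine le_trans (le_abs_self _) ?_
    exact trace_mul_abs_le hP (X - Y)
  exact add_le_add (le_projMax hP Y) (by simpa using h2)

end Traces


section Spectral
variable {κ : ℕ}

lemma isHermitian_of_isSymm {X : Matrix (Fin p) (Fin p) ℝ} (hX : X.IsSymm) :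
    X.IsHermitian := by
  rw [Matrix.IsHermitian, Matrix.conjTranspose_eq_transpose_of_trivial]
  exact hX

lemma triple_apply (A : Matrix (Fin p) (Fin p) ℝ) (d : Fin p → ℝ) (i j : Fin p) :
    (A * Matrix.diagonal d * Aᵀ) i j = ∑ k, A i k * d k * A j k := by
  rw [Matrix.mul_apply]
  refine Finset.sum_congr rfl fun k _ => ?_
  rw [Matrix.mul_diagonal, Matrix.transpose_apply]

/-- Every symmetric real matrix has an ordered (antitone) eigendecomposition, which computes
all the `kyFanEig` values. -/
lemma exists_decomp {X : Matrix (Fin p) (Fin p) ℝ} (hX : X.IsSymm) :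
    ∃ (R : Matrix (Fin p) (Fin p) ℝ) (ρ : Fin p → ℝ), Rᵀ * R = 1 ∧ Antitone ρ ∧
      X = R * Matrix.diagonal ρ * Rᵀ ∧
      ∀ j : ℕ, kyFanEig j X = ∑ i ∈ Finset.univ.filter (fun i : Fin p => (i : ℕ) < j), ρ i := by
  have hX' : X.IsHermitian := isHermitian_of_isSymm hX
  set U : Matrix (Fin p) (Fin p) ℝ := (hX'.eigenvectorUnitary : Matrix (Fin p) (Fin p) ℝ)
    with hU
  have hUmem := hX'.eigenvectorUnitary.2
  have hUtU : Uᵀ * U = 1 := by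
    have := (Unitary.mem_iff.mp hUmem).1
    rwa [Matrix.star_eq_conjTranspose, Matrix.conjTranspose_eq_transpose_of_trivial] at this
  have hspec : X = U * Matrix.diagonal hX'.eigenvalues * Uᵀ := by
    have := hX'.spectral_theorem
    rwa [Unitary.conjStarAlgAut_apply, Matrix.star_eq_conjTranspose, Matrix.conjTranspose_eq_transpose_of_trivial,
      RCLike.ofReal_real_eq_id, Function.id_comp] at this
  set σ : Equiv.Perm (Fin p) := (Fin.revPerm.trans (Tuple.sort hX'.eigenvalues)) with hσ
  set ρ : Fin p → ℝ := fun a => hX'.eigenvalues (σ a) with hρdef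
  have hρ : Antitone ρ := by
    intro a b hab
    have h1 : b.rev ≤ a.rev := Fin.rev_le_rev.mpr hab
    exact Tuple.monotone_sort hX'.eigenvalues h1
  set R : Matrix (Fin p) (Fin p) ℝ := Matrix.of (fun i a => U i (σ a)) with hR
  refine ⟨R, ρ, ?_, hρ, ?_, ?_⟩
  · ext a b
    have h1 : (Rᵀ * R) a b = ∑ i, U i (σ a) * U i (σ b) := by
      rw [Matrix.mul_apply]
      exact Finset.sum_congr rfl fun i _ => rfl
    have h2 : (Uᵀ * U) (σ a) (σ b) = ∑ i, U i (σ a) * U i (σ b) := by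
      rw [Matrix.mul_apply]
      exact Finset.sum_congr rfl fun i _ => rfl
    rw [h1, ← h2, hUtU]
    by_cases h : a = b
    · subst h; simp
    · rw [Matrix.one_apply_ne (fun hc => h (σ.injective hc)), Matrix.one_apply_ne h]
  · ext i j
    rw [triple_apply, hspec, triple_apply]
    exact (Equiv.sum_comp σ (fun k => U i k * hX'.eigenvalues k * U j k)).symm
  · intro j
    rw [kyFanEig, dif_pos hX']
    rfl

lemma kyFanEig_eq_projMax {X : Matrix (Fin p) (Fin p) ℝ} (hX : X.IsSymm)
    (hκ1 : 1 ≤ κ) (hκp : κ ≤ p) : kyFanEig κ X = projMax κ X := by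
  obtain ⟨R, ρ, hR, hρ, hdec, hval⟩ := exists_decomp hX
  rw [hval κ, hdec, projMax_eq_of_decomp hκ1 hκp hR hρ]

lemma exists_attain {X : Matrix (Fin p) (Fin p) ℝ} (hX : X.IsSymm)
    (hκ1 : 1 ≤ κ) (hκp : κ ≤ p) :
    ∃ P ∈ projSet κ p, (X * P).trace = projMax κ X := by
  obtain ⟨R, ρ, hR, hρ, hdec, hval⟩ := exists_decomp hX
  obtain ⟨P, hP, hPt⟩ := trace_attained_of_decomp (ρ := ρ) hκp hR
  exact ⟨P, hP, by rw [hdec, hPt, ← hdec, hdec, projMax_eq_of_decomp hκ1 hκp hR hρ]⟩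

lemma projSet_isCompact : IsCompact (projSet κ p) := by
  have hbox : IsCompact (Set.pi Set.univ
      (fun _ : Fin p => Set.pi Set.univ fun _ : Fin p => Set.Icc (-1:ℝ) 1)
        : Set (Matrix (Fin p) (Fin p) ℝ)) :=
    isCompact_univ_pi fun _ => isCompact_univ_pi fun _ => isCompact_Icc
  refine IsCompact.of_isClosed_subset hbox ?_ ?_
  · have hc1 : IsClosed {P : Matrix (Fin p) (Fin p) ℝ | Pᵀ = P} :=
      isClosed_eq (continuous_id.matrix_transpose) continuous_id
    have hc2 : IsClosed {P : Matrix (Fin p) (Fin p) ℝ | P * P = P} :=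
      isClosed_eq (continuous_id.matrix_mul continuous_id) continuous_id
    have hc3 : IsClosed {P : Matrix (Fin p) (Fin p) ℝ | P.trace = (κ:ℝ)} :=
      isClosed_eq (continuous_id.matrix_trace) continuous_const
    have : projSet κ p = ({P : Matrix (Fin p) (Fin p) ℝ | Pᵀ = P}
        ∩ {P | P * P = P}) ∩ {P | P.trace = (κ:ℝ)} := by
      ext P
      simp only [projSet, Set.mem_setOf_eq, Set.mem_inter_iff, Matrix.IsSymm, and_assoc]
    rw [this]
    exact (hc1.inter hc2).inter hc3
  · rintro P ⟨hs, hi, -⟩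
    intro i _
    intro j _
    have := proj_entry_abs_le_one hs hi i j
    rw [Set.mem_Icc]
    exact abs_le.mp this

end Spectral


section Mu
variable {κ : ℕ} {μ : Fin p → ℝ}

lemma top_subset_lt (hκ1 : 1 ≤ κ) (hκp : κ ≤ p) (hμ : Antitone μ) :
    Finset.univ.filter (fun i : Fin p => μ (⟨κ-1, Nat.sub_one_lt_of_le hκ1 hκp⟩ : Fin p) < μ i)
      ⊆ Finset.univ.filter (fun i : Fin p => (i:ℕ) < κ) := by
  intro i hi
  rw [Finset.mem_filter] at *
  refine ⟨hi.1, ?_⟩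
  by_contra h
  have hle : (⟨κ-1, Nat.sub_one_lt_of_le hκ1 hκp⟩ : Fin p) ≤ i := by
    rw [Fin.le_def]
    show κ - 1 ≤ (i : ℕ)
    omega
  exact absurd (hμ hle) (not_le.mpr hi.2)

lemma top_card_lt (hκ1 : 1 ≤ κ) (hκp : κ ≤ p) (hμ : Antitone μ) :
    (Finset.univ.filter (fun i : Fin p => μ (⟨κ-1, Nat.sub_one_lt_of_le hκ1 hκp⟩ : Fin p) < μ i)).card < κ := by
  have hss : Finset.univ.filter (fun i : Fin p => μ (⟨κ-1, Nat.sub_one_lt_of_le hκ1 hκp⟩ : Fin p) < μ i)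
      ⊂ Finset.univ.filter (fun i : Fin p => (i:ℕ) < κ) := by
    rw [Finset.ssubset_iff_of_subset (top_subset_lt hκ1 hκp hμ)]
    refine ⟨⟨κ-1, Nat.sub_one_lt_of_le hκ1 hκp⟩, ?_, ?_⟩
    · rw [Finset.mem_filter]
      exact ⟨Finset.mem_univ _, by show κ - 1 < κ; omega⟩
    · rw [Finset.mem_filter]; simp
  have := Finset.card_lt_card hss
  rwa [card_filter_lt hκp] at this

lemma sdiff_subset_theta (hκ1 : 1 ≤ κ) (hκp : κ ≤ p) (hμ : Antitone μ) :
    (Finset.univ.filter (fun i : Fin p => (i:ℕ) < κ))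
        \ (Finset.univ.filter (fun i : Fin p => μ (⟨κ-1, Nat.sub_one_lt_of_le hκ1 hκp⟩ : Fin p) < μ i))
      ⊆ Finset.univ.filter (fun i : Fin p => μ i = μ (⟨κ-1, Nat.sub_one_lt_of_le hκ1 hκp⟩ : Fin p)) := by
  intro i hi
  rw [Finset.mem_sdiff, Finset.mem_filter, Finset.mem_filter] at hi
  rw [Finset.mem_filter]
  refine ⟨Finset.mem_univ _, ?_⟩
  have h1 : μ (⟨κ-1, Nat.sub_one_lt_of_le hκ1 hκp⟩ : Fin p) ≤ μ i := by
    apply hμ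
    rw [Fin.le_def]
    show (i : ℕ) ≤ κ - 1
    omega
  have h2 : ¬ (μ (⟨κ-1, Nat.sub_one_lt_of_le hκ1 hκp⟩ : Fin p) < μ i) := fun hc => hi.2 ⟨Finset.mem_univ _, hc⟩
  linarith [lt_or_eq_of_le h1]
  
lemma l_le_s (hκ1 : 1 ≤ κ) (hκp : κ ≤ p) (hμ : Antitone μ) :
    κ - (Finset.univ.filter (fun i : Fin p => μ (⟨κ-1, Nat.sub_one_lt_of_le hκ1 hκp⟩ : Fin p) < μ i)).card
      ≤ (Finset.univ.filter (fun i : Fin p => μ i = μ (⟨κ-1, Nat.sub_one_lt_of_le hκ1 hκp⟩ : Fin p))).card := by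
  have h1 := Finset.card_le_card (sdiff_subset_theta hκ1 hκp hμ)
  rwa [Finset.card_sdiff_of_subset (top_subset_lt hκ1 hκp hμ), card_filter_lt hκp] at h1

lemma sum_mu_split (hκ1 : 1 ≤ κ) (hκp : κ ≤ p) (hμ : Antitone μ) :
    ∑ i ∈ Finset.univ.filter (fun i : Fin p => (i:ℕ) < κ), μ i
      = (∑ i ∈ Finset.univ.filter (fun i : Fin p => μ (⟨κ-1, Nat.sub_one_lt_of_le hκ1 hκp⟩ : Fin p) < μ i), μ i)
        + ((κ - (Finset.univ.filter
              (fun i : Fin p => μ (⟨κ-1, Nat.sub_one_lt_of_le hκ1 hκp⟩ : Fin p) < μ i)).card : ℕ) : ℝ)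
          * μ (⟨κ-1, Nat.sub_one_lt_of_le hκ1 hκp⟩ : Fin p) := by
  rw [← Finset.sum_sdiff (top_subset_lt hκ1 hκp hμ)]
  rw [add_comm]
  congr 1
  have hconst : ∀ i ∈ (Finset.univ.filter (fun i : Fin p => (i:ℕ) < κ))
      \ (Finset.univ.filter (fun i : Fin p => μ (⟨κ-1, Nat.sub_one_lt_of_le hκ1 hκp⟩ : Fin p) < μ i)),
      μ i = μ (⟨κ-1, Nat.sub_one_lt_of_le hκ1 hκp⟩ : Fin p) := by
    intro i hi
    have := sdiff_subset_theta hκ1 hκp hμ hi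
    rw [Finset.mem_filter] at this
    exact this.2
  rw [Finset.sum_congr rfl hconst, Finset.sum_const,
    Finset.card_sdiff_of_subset (top_subset_lt hκ1 hκp hμ), card_filter_lt hκp, nsmul_eq_mul]

end Mu


section Blocks
variable {κ : ℕ}

lemma theta_sum (μ : Fin p → ℝ) (c : ℝ) (f : Fin p → ℝ) :
    ∑ i ∈ Finset.univ.filter (fun i : Fin p => μ i = c), f i
      = ∑ a : Fin ((Finset.univ.filter (fun i : Fin p => μ i = c)).card),
          f (((Finset.univ.filter (fun i : Fin p => μ i = c)).orderIsoOfFin rfl a : Fin p)) := by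
  rw [← Finset.sum_coe_sort (Finset.univ.filter (fun i : Fin p => μ i = c)) f]
  exact (Fintype.sum_equiv ((Finset.univ.filter (fun i : Fin p => μ i = c)).orderIsoOfFin
    rfl).toEquiv _ _ (fun a => rfl)).symm

lemma qhq_isSymm {Q H : Matrix (Fin p) (Fin p) ℝ} (hH : H.IsSymm) :
    (Qᵀ * H * Q).IsSymm := by
  rw [Matrix.IsSymm, Matrix.transpose_mul, Matrix.transpose_mul, Matrix.transpose_transpose,
    hH.eq, ← Matrix.mul_assoc]

lemma maximizer_trace_le (hκ1 : 1 ≤ κ) (hκp : κ ≤ p)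
    (Q : Matrix (Fin p) (Fin p) ℝ) (μ : Fin p → ℝ)
    (hQ : Qᵀ * Q = 1) (hμ : Antitone μ) (H : Matrix (Fin p) (Fin p) ℝ) (hH : H.IsSymm)
    {P : Matrix (Fin p) (Fin p) ℝ} (hP : P ∈ projSet κ p)
    (hPZ : ((Q * Matrix.diagonal μ * Qᵀ) * P).trace
      = ∑ i ∈ Finset.univ.filter (fun i : Fin p => (i : ℕ) < κ), μ i) :
    (H * P).trace
      ≤ (∑ i ∈ Finset.univ.filter (fun i : Fin p => μ (⟨κ - 1, Nat.sub_one_lt_of_le hκ1 hκp⟩ : Fin p) < μ i),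
            (Qᵀ * H * Q) i i)
        + kyFanEig (κ - (Finset.univ.filter
              (fun i : Fin p => μ (⟨κ - 1, Nat.sub_one_lt_of_le hκ1 hκp⟩ : Fin p) < μ i)).card)
            (Matrix.of fun (i j : Fin ((Finset.univ.filter
                  (fun i : Fin p => μ i = μ (⟨κ - 1, Nat.sub_one_lt_of_le hκ1 hκp⟩ : Fin p))).card)) =>
              (Qᵀ * H * Q)
                (((Finset.univ.filter
                    (fun i : Fin p => μ i = μ (⟨κ - 1, Nat.sub_one_lt_of_le hκ1 hκp⟩ : Fin p))).orderIsoOfFin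
                    rfl i : Fin p))
                (((Finset.univ.filter
                    (fun i : Fin p => μ i = μ (⟨κ - 1, Nat.sub_one_lt_of_le hκ1 hκp⟩ : Fin p))).orderIsoOfFin
                    rfl j : Fin p))) := by
  have hQQ : Q * Qᵀ = 1 := mul_eq_one_comm.mp hQ
  set c := μ (⟨κ - 1, Nat.sub_one_lt_of_le hκ1 hκp⟩ : Fin p) with hc
  set B := Qᵀ * H * Q with hB
  set P' := Qᵀ * P * Q with hP'
  have hP'mem : P' ∈ projSet κ p := conj_mem_projSet hQ hP
  obtain ⟨hs', hi', ht'⟩ := hP'mem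
  -- the diagonal of P' is a maximizing weight vector
  have h1 : ((Q * Matrix.diagonal μ * Qᵀ) * P).trace = ∑ i, μ i * P' i i := by
    rw [trace_triple]
    exact trace_diagonal_mul μ _
  have hkey := key_eq hκ1 hκp hμ (fun i => proj_diag_nonneg hs' hi' i)
    (fun i => proj_diag_le_one hs' hi' i)
    (show ∑ i, P' i i = (κ:ℝ) by rw [← trace_eq_sum]; exact ht')
    (show ∑ i, μ i * P' i i
        = ∑ i ∈ Finset.univ.filter (fun i : Fin p => (i:ℕ) < κ), μ i by rw [← h1]; exact hPZ)
  have hd1 : ∀ i, c < μ i → P' i i = 1 := fun i hlt => (hkey i).1 (by rw [hc] at hlt; exact hlt)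
  have hd0 : ∀ i, μ i < c → P' i i = 0 := fun i hlt => (hkey i).2 (by rw [hc] at hlt; exact hlt)
  have hoffr : ∀ i, μ i ≠ c → ∀ j, j ≠ i → P' i j = 0 := by
    intro i hne j hj
    rcases lt_or_gt_of_ne hne with hlt | hgt
    · exact proj_row_eq_zero hs' hi' (Or.inl (hd0 i hlt)) hj
    · exact proj_row_eq_zero hs' hi' (Or.inr (hd1 i hgt)) hj
  have hoffc : ∀ i, μ i ≠ c → ∀ j, j ≠ i → P' j i = 0 := by
    intro i hne j hj
    rw [hs'.apply i j]
    exact hoffr i hne j hj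
  -- trace identity
  have hHQ : Q * B * Qᵀ = H := by
    have h2 : Q * B * Qᵀ = (Q * Qᵀ) * H * (Q * Qᵀ) := by
      rw [hB]; simp only [Matrix.mul_assoc]
    rw [h2, hQQ, Matrix.one_mul, Matrix.mul_one]
  have htrHP : (H * P).trace = ∑ i, ∑ j, B i j * P' j i := by
    rw [← hHQ, trace_triple, ← hP', trace_mul_eq]
  -- splitting the trace into blocks
  have hsplit1 : ∑ i, ∑ j, B i j * P' j i
      = (∑ i ∈ Finset.univ.filter (fun i : Fin p => c < μ i), ∑ j, B i j * P' j i)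
        + ∑ i ∈ Finset.univ.filter (fun i : Fin p => ¬ c < μ i), ∑ j, B i j * P' j i :=
    (Finset.sum_filter_add_sum_filter_not _ _ _).symm
  have hsplit2 : ∑ i ∈ Finset.univ.filter (fun i : Fin p => ¬ c < μ i), ∑ j, B i j * P' j i
      = (∑ i ∈ (Finset.univ.filter (fun i : Fin p => ¬ c < μ i)).filter
            (fun i => μ i = c), ∑ j, B i j * P' j i)
        + ∑ i ∈ (Finset.univ.filter (fun i : Fin p => ¬ c < μ i)).filter
            (fun i => ¬ μ i = c), ∑ j, B i j * P' j i :=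
    (Finset.sum_filter_add_sum_filter_not _ _ _).symm
  have hfe : (Finset.univ.filter (fun i : Fin p => ¬ c < μ i)).filter (fun i => μ i = c)
      = Finset.univ.filter (fun i : Fin p => μ i = c) := by
    ext i
    simp only [Finset.mem_filter, Finset.mem_univ, true_and]
    exact ⟨fun h => h.2, fun h => ⟨by rw [h]; exact lt_irrefl c, h⟩⟩
  -- the bottom block contributes zero
  have hbot : ∑ i ∈ (Finset.univ.filter (fun i : Fin p => ¬ c < μ i)).filter
      (fun i => ¬ μ i = c), ∑ j, B i j * P' j i = 0 := by
    refine Finset.sum_eq_zero fun i hi => ?_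
    rw [Finset.mem_filter, Finset.mem_filter] at hi
    have hne : μ i ≠ c := hi.2
    refine Finset.sum_eq_zero fun j _ => ?_
    by_cases hj : j = i
    · subst hj
      rw [hd0 j (lt_of_le_of_ne (not_lt.mp hi.1.2) hne), mul_zero]
    · rw [hoffc i hne j hj, mul_zero]
  -- the top block contributes the diagonal of B
  have htop : ∑ i ∈ Finset.univ.filter (fun i : Fin p => c < μ i), ∑ j, B i j * P' j i
      = ∑ i ∈ Finset.univ.filter (fun i : Fin p => c < μ i), B i i := by
    refine Finset.sum_congr rfl fun i hi => ?_
    rw [Finset.mem_filter] at hi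
    rw [Finset.sum_eq_single i]
    · rw [hd1 i hi.2, mul_one]
    · intro j _ hj
      rw [hoffc i (ne_of_gt hi.2) j hj, mul_zero]
    · intro h; exact absurd (Finset.mem_univ i) h
  -- the middle block
  have hmid : ∀ i ∈ Finset.univ.filter (fun i : Fin p => μ i = c),
      ∑ j, B i j * P' j i
        = ∑ j ∈ Finset.univ.filter (fun j : Fin p => μ j = c), B i j * P' j i := by
    intro i hi
    rw [Finset.mem_filter] at hi
    rw [← Finset.sum_filter_add_sum_filter_not Finset.univ (fun j : Fin p => μ j = c)]
    have hz : ∑ j ∈ Finset.univ.filter (fun j : Fin p => ¬ μ j = c), B i j * P' j i = 0 := by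
      refine Finset.sum_eq_zero fun j hj => ?_
      rw [Finset.mem_filter] at hj
      have hji : i ≠ j := fun h => hj.2 (h ▸ hi.2)
      rw [hoffr j hj.2 i hji, mul_zero]
    rw [hz, add_zero]
  -- setup of the tied block
  set θF := Finset.univ.filter (fun i : Fin p => μ i = c) with hθF
  set sn := θF.card with hsn
  set e : Fin sn → Fin p := fun a => ((θF.orderIsoOfFin rfl a : Fin p)) with he
  have he_mem : ∀ a, e a ∈ θF := fun a => (θF.orderIsoOfFin rfl a).2
  have he_muc : ∀ a, μ (e a) = c := by
    intro a
    have h5 := he_mem a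
    rw [hθF, Finset.mem_filter] at h5
    exact h5.2
  set Pθ : Matrix (Fin sn) (Fin sn) ℝ := Matrix.of (fun a b => P' (e a) (e b)) with hPθ
  set B' : Matrix (Fin sn) (Fin sn) ℝ := Matrix.of (fun a b => B (e a) (e b)) with hB'
  -- the middle block as a small trace
  have hmid2 : ∑ i ∈ θF, ∑ j ∈ θF, B i j * P' j i = (B' * Pθ).trace := by
    rw [trace_mul_eq]
    rw [show (∑ i ∈ θF, ∑ j ∈ θF, B i j * P' j i)
        = ∑ a : Fin sn, ∑ j ∈ θF, B (e a) j * P' j (e a) from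
      theta_sum μ c (fun i => ∑ j ∈ θF, B i j * P' j i)]
    refine Finset.sum_congr rfl fun a _ => ?_
    rw [show (∑ j ∈ θF, B (e a) j * P' j (e a))
        = ∑ b : Fin sn, B (e a) (e b) * P' (e b) (e a) from
      theta_sum μ c (fun j => B (e a) j * P' j (e a))]
    rfl
  -- Pθ is a projection of the right rank
  have hPθsymm : Pθ.IsSymm := by
    rw [Matrix.IsSymm]
    ext a b
    rw [Matrix.transpose_apply, hPθ, Matrix.of_apply, Matrix.of_apply]
    exact hs'.apply (e a) (e b)
  have hPθidem : Pθ * Pθ = Pθ := by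
    ext a b
    rw [Matrix.mul_apply]
    simp only [hPθ, Matrix.of_apply]
    have h3 : P' (e a) (e b) = ∑ k, P' (e a) k * P' k (e b) := by
      conv_lhs => rw [← hi']
      rw [Matrix.mul_apply]
    rw [h3, ← Finset.sum_filter_add_sum_filter_not Finset.univ (fun k : Fin p => μ k = c)
      (fun k => P' (e a) k * P' k (e b))]
    have hz : ∑ k ∈ Finset.univ.filter (fun k : Fin p => ¬ μ k = c),
        P' (e a) k * P' k (e b) = 0 := by
      refine Finset.sum_eq_zero fun k hk => ?_
      rw [Finset.mem_filter] at hk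
      have hkb : e b ≠ k := fun hh => hk.2 (hh ▸ he_muc b)
      rw [hoffr k hk.2 (e b) hkb, mul_zero]
    rw [hz, add_zero]
    rw [show (∑ k ∈ Finset.univ.filter (fun k : Fin p => μ k = c),
        P' (e a) k * P' k (e b))
        = ∑ x : Fin sn, P' (e a) (e x) * P' (e x) (e b) from
      theta_sum μ c (fun k => P' (e a) k * P' k (e b))]
  -- diagonal sums
  have hmκ : (Finset.univ.filter (fun i : Fin p => c < μ i)).card < κ :=
    top_card_lt hκ1 hκp hμ
  have hsplitA : ∑ i, P' i i
      = (∑ i ∈ Finset.univ.filter (fun i : Fin p => c < μ i), P' i i)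
        + ∑ i ∈ Finset.univ.filter (fun i : Fin p => ¬ c < μ i), P' i i :=
    (Finset.sum_filter_add_sum_filter_not _ _ _).symm
  have hsplitB : ∑ i ∈ Finset.univ.filter (fun i : Fin p => ¬ c < μ i), P' i i
      = (∑ i ∈ (Finset.univ.filter (fun i : Fin p => ¬ c < μ i)).filter
            (fun i => μ i = c), P' i i)
        + ∑ i ∈ (Finset.univ.filter (fun i : Fin p => ¬ c < μ i)).filter
            (fun i => ¬ μ i = c), P' i i :=
    (Finset.sum_filter_add_sum_filter_not _ _ _).symm
  have htops : ∑ i ∈ Finset.univ.filter (fun i : Fin p => c < μ i), P' i i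
      = ((Finset.univ.filter (fun i : Fin p => c < μ i)).card : ℝ) := by
    rw [Finset.sum_congr rfl (fun i hi => hd1 i (Finset.mem_filter.mp hi).2),
      Finset.sum_const, nsmul_eq_mul, mul_one]
  have hbots : ∑ i ∈ (Finset.univ.filter (fun i : Fin p => ¬ c < μ i)).filter
      (fun i => ¬ μ i = c), P' i i = 0 := by
    refine Finset.sum_eq_zero fun i hi => ?_
    rw [Finset.mem_filter, Finset.mem_filter] at hi
    exact hd0 i (lt_of_le_of_ne (not_lt.mp hi.1.2) hi.2)
  have hθsum : ∑ i ∈ θF, P' i i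
      = ((κ - (Finset.univ.filter (fun i : Fin p => c < μ i)).card : ℕ) : ℝ) := by
    have hκsum : ∑ i, P' i i = (κ:ℝ) := by rw [← trace_eq_sum]; exact ht'
    have hθeq : ∑ i ∈ (Finset.univ.filter (fun i : Fin p => ¬ c < μ i)).filter
        (fun i => μ i = c), P' i i = ∑ i ∈ θF, P' i i := by rw [hfe]
    rw [Nat.cast_sub (le_of_lt hmκ)]
    linarith [hsplitA, hsplitB, htops, hbots, hκsum, hθeq]
  have hPθtrace : Pθ.trace
      = ((κ - (Finset.univ.filter (fun i : Fin p => c < μ i)).card : ℕ) : ℝ) := by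
    rw [← hθsum]
    rw [show (∑ i ∈ θF, P' i i) = ∑ a : Fin sn, P' (e a) (e a) from
      theta_sum μ c (fun i => P' i i)]
    rfl
  have hPθmem : Pθ ∈ projSet
      (κ - (Finset.univ.filter (fun i : Fin p => c < μ i)).card) sn :=
    ⟨hPθsymm, hPθidem, hPθtrace⟩
  -- Ky Fan bound on the small block
  have hln1 : 1 ≤ κ - (Finset.univ.filter (fun i : Fin p => c < μ i)).card := by omega
  have hlns : κ - (Finset.univ.filter (fun i : Fin p => c < μ i)).card ≤ sn :=
    l_le_s hκ1 hκp hμ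
  have hB'symm : B'.IsSymm := by
    rw [Matrix.IsSymm]
    ext a b
    rw [Matrix.transpose_apply, hB', Matrix.of_apply, Matrix.of_apply]
    exact (qhq_isSymm hH).apply (e a) (e b)
  have hfan : (B' * Pθ).trace
      ≤ kyFanEig (κ - (Finset.univ.filter (fun i : Fin p => c < μ i)).card) B' := by
    rw [kyFanEig_eq_projMax hB'symm hln1 hlns]
    exact le_projMax hPθmem B'
  -- final assembly
  have hθg : ∑ i ∈ (Finset.univ.filter (fun i : Fin p => ¬ c < μ i)).filter
      (fun i => μ i = c), ∑ j, B i j * P' j i = (B' * Pθ).trace := by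
    rw [hfe, Finset.sum_congr rfl hmid, hmid2]
  have hfinal : (H * P).trace
      ≤ (∑ i ∈ Finset.univ.filter (fun i : Fin p => c < μ i), B i i)
        + kyFanEig (κ - (Finset.univ.filter (fun i : Fin p => c < μ i)).card) B' := by
    rw [htrHP, hsplit1, hsplit2, htop, hθg, hbot, add_zero]
    exact add_le_add_right hfan _
  exact hfinal

lemma exists_maximizer (hκ1 : 1 ≤ κ) (hκp : κ ≤ p)
    (Q : Matrix (Fin p) (Fin p) ℝ) (μ : Fin p → ℝ)
    (hQ : Qᵀ * Q = 1) (hμ : Antitone μ) (H : Matrix (Fin p) (Fin p) ℝ) (hH : H.IsSymm) :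
    ∃ P ∈ projSet κ p,
      ((Q * Matrix.diagonal μ * Qᵀ) * P).trace
          = ∑ i ∈ Finset.univ.filter (fun i : Fin p => (i : ℕ) < κ), μ i
        ∧ (H * P).trace
          = (∑ i ∈ Finset.univ.filter (fun i : Fin p => μ (⟨κ - 1, Nat.sub_one_lt_of_le hκ1 hκp⟩ : Fin p) < μ i),
                (Qᵀ * H * Q) i i)
            + kyFanEig (κ - (Finset.univ.filter
                  (fun i : Fin p => μ (⟨κ - 1, Nat.sub_one_lt_of_le hκ1 hκp⟩ : Fin p) < μ i)).card)
                (Matrix.of fun (i j : Fin ((Finset.univ.filter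
                      (fun i : Fin p => μ i = μ (⟨κ - 1, Nat.sub_one_lt_of_le hκ1 hκp⟩ : Fin p))).card)) =>
                  (Qᵀ * H * Q)
                    (((Finset.univ.filter
                        (fun i : Fin p => μ i = μ (⟨κ - 1, Nat.sub_one_lt_of_le hκ1 hκp⟩ : Fin p))).orderIsoOfFin
                        rfl i : Fin p))
                    (((Finset.univ.filter
                        (fun i : Fin p => μ i = μ (⟨κ - 1, Nat.sub_one_lt_of_le hκ1 hκp⟩ : Fin p))).orderIsoOfFin
                        rfl j : Fin p))) := by
  have hQQ : Q * Qᵀ = 1 := mul_eq_one_comm.mp hQ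
  set c := μ (⟨κ - 1, Nat.sub_one_lt_of_le hκ1 hκp⟩ : Fin p) with hc
  set B := Qᵀ * H * Q with hB
  set θF := Finset.univ.filter (fun i : Fin p => μ i = c) with hθF
  set sn := θF.card with hsn
  set e : Fin sn → Fin p := fun a => ((θF.orderIsoOfFin rfl a : Fin p)) with he
  have he_mem : ∀ a, e a ∈ θF := fun a => (θF.orderIsoOfFin rfl a).2
  have he_muc : ∀ a, μ (e a) = c := by
    intro a
    have h5 := he_mem a
    rw [hθF, Finset.mem_filter] at h5
    exact h5.2
  have he_inj : Function.Injective e := fun a b hab =>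
    (θF.orderIsoOfFin rfl).injective (Subtype.coe_injective hab)
  set B' : Matrix (Fin sn) (Fin sn) ℝ := Matrix.of (fun a b => B (e a) (e b)) with hB'
  have hB'symm : B'.IsSymm := by
    rw [Matrix.IsSymm]
    ext a b
    rw [Matrix.transpose_apply, hB', Matrix.of_apply, Matrix.of_apply]
    exact (qhq_isSymm hH).apply (e a) (e b)
  have hmκ : (Finset.univ.filter (fun i : Fin p => c < μ i)).card < κ :=
    top_card_lt hκ1 hκp hμ
  set m := (Finset.univ.filter (fun i : Fin p => c < μ i)).card with hm
  have hln1 : 1 ≤ κ - m := by omega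
  have hlns : κ - m ≤ sn := l_le_s hκ1 hκp hμ
  obtain ⟨Pθ, hPθmem, hPθtr⟩ := exists_attain hB'symm hln1 hlns
  obtain ⟨hPθs, hPθi, hPθtr0⟩ := hPθmem
  set ind : Fin p → ℝ := fun i => if c < μ i then 1 else 0 with hind
  set E : Matrix (Fin p) (Fin sn) ℝ := Matrix.of (fun i a => if i = e a then 1 else 0) with hE
  have hEtE : Eᵀ * E = 1 := by
    ext a b
    rw [Matrix.mul_apply]
    simp only [hE, Matrix.transpose_apply, Matrix.of_apply]
    rw [Finset.sum_eq_single (e a)]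
    · by_cases hab : a = b
      · subst hab; simp [Matrix.one_apply_eq]
      · have hne : e a ≠ e b := fun h => hab (he_inj h)
        simp [hne, Matrix.one_apply_ne hab]
    · intro k _ hk
      simp [hk]
    · intro h; exact absurd (Finset.mem_univ _) h
  have hcomp : ∀ G : Matrix (Fin p) (Fin p) ℝ, Eᵀ * G * E
      = Matrix.of (fun a b => G (e a) (e b)) := by
    intro G
    ext a b
    rw [Matrix.mul_apply]
    have h1 : ∀ j, (Eᵀ * G) a j = G (e a) j := by
      intro j
      rw [Matrix.mul_apply]
      rw [Finset.sum_eq_single (e a)]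
      · simp [hE]
      · intro k _ hk; simp [hE, hk]
      · intro h; exact absurd (Finset.mem_univ _) h
    simp only [h1]
    rw [Finset.sum_eq_single (e b)]
    · simp [hE]
    · intro k _ hk; simp [hE, hk]
    · intro h; exact absurd (Finset.mem_univ _) h
  have hDE : Matrix.diagonal ind * E = 0 := by
    ext i a
    rw [Matrix.diagonal_mul, Matrix.zero_apply]
    by_cases hieq : i = e a
    · subst hieq
      simp [hind, hE, he_muc a]
    · simp [hE, hieq]
  have hEtD : Eᵀ * Matrix.diagonal ind = 0 := by
    have h2 : (Matrix.diagonal ind * E)ᵀ = Eᵀ * (Matrix.diagonal ind)ᵀ :=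
      Matrix.transpose_mul _ _
    rw [hDE, Matrix.diagonal_transpose, Matrix.transpose_zero] at h2
    exact h2.symm
  set M := Matrix.diagonal ind + E * Pθ * Eᵀ with hM
  have hMsymm : M.IsSymm := by
    rw [Matrix.IsSymm, hM, Matrix.transpose_add, Matrix.diagonal_transpose]
    congr 1
    rw [Matrix.transpose_mul, Matrix.transpose_mul, Matrix.transpose_transpose, hPθs.eq,
      ← Matrix.mul_assoc]
  have hidem : M * M = M := by
    rw [hM, Matrix.add_mul, Matrix.mul_add, Matrix.mul_add]
    have t1 : Matrix.diagonal ind * Matrix.diagonal ind = Matrix.diagonal ind := by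
      rw [Matrix.diagonal_mul_diagonal]
      refine congrArg _ (funext fun i => ?_)
      by_cases h : c < μ i <;> simp [hind, h]
    have t2 : Matrix.diagonal ind * (E * Pθ * Eᵀ) = 0 := by
      rw [← Matrix.mul_assoc, ← Matrix.mul_assoc, hDE, Matrix.zero_mul, Matrix.zero_mul]
    have t3 : (E * Pθ * Eᵀ) * Matrix.diagonal ind = 0 := by
      rw [Matrix.mul_assoc (E * Pθ) Eᵀ _, hEtD, Matrix.mul_zero]
    have t4 : (E * Pθ * Eᵀ) * (E * Pθ * Eᵀ) = E * Pθ * Eᵀ := by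
      calc (E * Pθ * Eᵀ) * (E * Pθ * Eᵀ) = E * Pθ * ((Eᵀ * E) * (Pθ * Eᵀ)) := by
            simp only [Matrix.mul_assoc]
        _ = E * Pθ * (Pθ * Eᵀ) := by rw [hEtE, Matrix.one_mul]
        _ = E * (Pθ * Pθ) * Eᵀ := by simp only [Matrix.mul_assoc]
        _ = E * Pθ * Eᵀ := by rw [hPθi]
    rw [t1, t2, t3, t4, add_zero, zero_add]
  have htrEPE : (E * Pθ * Eᵀ).trace = Pθ.trace := by
    rw [Matrix.trace_mul_comm, ← Matrix.mul_assoc, hEtE, Matrix.one_mul]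
  have htraceM : M.trace = (κ : ℝ) := by
    rw [hM, Matrix.trace_add, htrEPE, hPθtr0, Matrix.trace_diagonal]
    rw [hind]
    rw [Finset.sum_boole]
    rw [← hm, ← Nat.cast_add]
    congr 1
    omega
  have hconjM : Qᵀ * (Q * M * Qᵀ) * Q = M := by
    calc Qᵀ * (Q * M * Qᵀ) * Q = (Qᵀ * Q) * (M * (Qᵀ * Q)) := by simp only [Matrix.mul_assoc]
      _ = M := by rw [hQ, Matrix.one_mul, Matrix.mul_one]
  refine ⟨Q * M * Qᵀ, ?_, ?_, ?_⟩
  · have h6 := conj_mem_projSet (κ := κ) (R := Qᵀ)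
      (by rw [Matrix.transpose_transpose]; exact hQQ) ⟨hMsymm, hidem, htraceM⟩
    rwa [Matrix.transpose_transpose] at h6
  · rw [trace_triple, hconjM, hM, Matrix.mul_add, Matrix.trace_add]
    have h8 : (Matrix.diagonal μ * Matrix.diagonal ind).trace
        = ∑ i ∈ Finset.univ.filter (fun i : Fin p => c < μ i), μ i := by
      rw [Matrix.diagonal_mul_diagonal, Matrix.trace_diagonal]
      rw [Finset.sum_congr rfl (fun i (_ : i ∈ Finset.univ) => by
        show μ i * ind i = if c < μ i then μ i else 0
        by_cases h : c < μ i <;> simp [hind, h])]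
      rw [Finset.sum_ite, Finset.sum_const_zero, add_zero]
    have h9 : (Matrix.diagonal μ * (E * Pθ * Eᵀ)).trace = c * ((κ - m : ℕ) : ℝ) := by
      have h10 : Matrix.diagonal μ * (E * Pθ * Eᵀ)
          = (Matrix.diagonal μ * E * Pθ) * Eᵀ := by simp only [Matrix.mul_assoc]
      rw [h10, Matrix.trace_mul_comm]
      have h11 : Eᵀ * (Matrix.diagonal μ * E * Pθ)
          = (Eᵀ * Matrix.diagonal μ * E) * Pθ := by simp only [Matrix.mul_assoc]
      rw [h11, hcomp]
      have h12 : Matrix.of (fun a b => Matrix.diagonal μ (e a) (e b))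
          = Matrix.diagonal (fun _ : Fin sn => c) := by
        ext a b
        by_cases hab : a = b
        · subst hab
          rw [Matrix.of_apply, Matrix.diagonal_apply_eq, Matrix.diagonal_apply_eq, he_muc a]
        · rw [Matrix.of_apply, Matrix.diagonal_apply_ne _ (fun h => hab (he_inj h)),
            Matrix.diagonal_apply_ne _ hab]
      rw [h12, trace_diagonal_mul, ← Finset.mul_sum]
      rw [show (∑ a, Pθ a a) = Pθ.trace from (trace_eq_sum Pθ).symm, hPθtr0]
    rw [h8, h9, sum_mu_split hκ1 hκp hμ]
    rw [mul_comm]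
  · have hHQ : Q * B * Qᵀ = H := by
      have h13 : Q * B * Qᵀ = (Q * Qᵀ) * H * (Q * Qᵀ) := by
        rw [hB]; simp only [Matrix.mul_assoc]
      rw [h13, hQQ, Matrix.one_mul, Matrix.mul_one]
    rw [← hHQ, trace_triple, hconjM, hM, Matrix.mul_add, Matrix.trace_add]
    have h14 : (B * Matrix.diagonal ind).trace
        = ∑ i ∈ Finset.univ.filter (fun i : Fin p => c < μ i), B i i := by
      rw [trace_mul_diagonal]
      rw [Finset.sum_congr rfl (fun i (_ : i ∈ Finset.univ) => by
        show B i i * ind i = if c < μ i then B i i else 0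
        by_cases h : c < μ i <;> simp [hind, h])]
      rw [Finset.sum_ite, Finset.sum_const_zero, add_zero]
    have h15 : (B * (E * Pθ * Eᵀ)).trace = kyFanEig (κ - m) B' := by
      have h10 : B * (E * Pθ * Eᵀ) = (B * E * Pθ) * Eᵀ := by simp only [Matrix.mul_assoc]
      rw [h10, Matrix.trace_mul_comm]
      have h11 : Eᵀ * (B * E * Pθ) = (Eᵀ * B * E) * Pθ := by simp only [Matrix.mul_assoc]
      rw [h11, hcomp, ← hB', hPθtr, kyFanEig_eq_projMax hB'symm hln1 hlns]
    rw [h14, h15]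

end Blocks


section Cluster

lemma clusterPt_map {α β : Type*} [TopologicalSpace α] [TopologicalSpace β]
    {x : α} {F : Filter α} (h : ClusterPt x F) {g : α → β} (hg : Continuous g) :
    ClusterPt (g x) (Filter.map g F) := by
  have h0 : Filter.NeBot (Filter.map g (nhds x ⊓ F)) := Filter.NeBot.map h g
  have h1 : Filter.map g (nhds x ⊓ F) ≤ nhds (g x) ⊓ Filter.map g F :=
    le_trans Filter.map_inf_le (inf_le_inf_right _ (hg.tendsto x))
  exact Filter.NeBot.mono h0 h1

lemma clusterPt_eq_of_tendsto {L : ℝ} {x : ℝ} {F : Filter ℝ}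
    (h : ClusterPt x F) (hF : F ≤ nhds L) : x = L := by
  refine eq_of_nhds_neBot (Filter.NeBot.mono h ?_)
  exact inf_le_inf_left _ hF

end Cluster

end KFaux

open KFaux

/-- Directional differentiability of `Φκ`: with an ordered eigendecomposition
`Z = Q Diag(μ) Qᵀ`, for every symmetric `H` the one-sided directional derivative of `Φκ` at
`Z` in direction `H` exists and equals
`Σ_{i : μ_i > μ_κ} (Qᵀ H Q)_{ii} + Φ_{l_κ(Z)}((Qᵀ H Q)_{θ_r θ_r})`, where `θ_r` is the set
of indices tied with `μ_κ` and `l_κ(Z) = κ − #{i : μ_i > μ_κ}`. -/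
theorem kyFanEig_directional_derivative (p κ : ℕ) (hκ1 : 1 ≤ κ) (hκp : κ ≤ p)
    (Z Q : Matrix (Fin p) (Fin p) ℝ) (μ : Fin p → ℝ)
    (hQ : Qᵀ * Q = 1) (hμ : Antitone μ)
    (hZ : Z = Q * Matrix.diagonal μ * Qᵀ)
    (H : Matrix (Fin p) (Fin p) ℝ) (hH : H.IsSymm) :
    Filter.Tendsto
      (fun t : ℝ => (kyFanEig κ (Z + t • H) - kyFanEig κ Z) / t)
      (nhdsWithin (0 : ℝ) (Set.Ioi 0))
      (nhds
        ((∑ i ∈ Finset.univ.filter (fun i : Fin p => μ (⟨κ - 1, by omega⟩ : Fin p) < μ i),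
            (Qᵀ * H * Q) i i)
          + kyFanEig
              (κ - (Finset.univ.filter
                  (fun i : Fin p => μ (⟨κ - 1, by omega⟩ : Fin p) < μ i)).card)
              (Matrix.of fun
                  (i j : Fin ((Finset.univ.filter
                    (fun i : Fin p => μ i = μ (⟨κ - 1, by omega⟩ : Fin p))).card)) =>
                (Qᵀ * H * Q)
                  (((Finset.univ.filter
                      (fun i : Fin p => μ i = μ (⟨κ - 1, by omega⟩ : Fin p))).orderIsoOfFin
                      rfl i : Fin p))
                  (((Finset.univ.filter
                      (fun i : Fin p => μ i = μ (⟨κ - 1, by omega⟩ : Fin p))).orderIsoOfFin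
                      rfl j : Fin p))))) := by
  have hQQ : Q * Qᵀ = 1 := mul_eq_one_comm.mp hQ
  have hZsymm : Z.IsSymm := by
    rw [hZ, Matrix.IsSymm, Matrix.transpose_mul, Matrix.transpose_mul,
      Matrix.transpose_transpose, Matrix.diagonal_transpose, ← Matrix.mul_assoc]
  have hsymms : ∀ t : ℝ, (Z + t • H).IsSymm := by
    intro t
    rw [Matrix.IsSymm, Matrix.transpose_add, Matrix.transpose_smul, hZsymm.eq, hH.eq]
  have hΦ : ∀ t : ℝ, kyFanEig κ (Z + t • H) = projMax κ (Z + t • H) :=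
    fun t => kyFanEig_eq_projMax (hsymms t) hκ1 hκp
  have hΦZ : kyFanEig κ Z = projMax κ Z := kyFanEig_eq_projMax hZsymm hκ1 hκp
  have hPMZ : projMax κ Z = ∑ i ∈ Finset.univ.filter (fun i : Fin p => (i:ℕ) < κ), μ i := by
    rw [hZ]; exact projMax_eq_of_decomp hκ1 hκp hQ hμ
  obtain ⟨P₀, hP₀mem, hP₀Z, hP₀H⟩ := exists_maximizer hκ1 hκp Q μ hQ hμ H hH
  set L := (H * P₀).trace with hL
  set C := ∑ i, ∑ j, |H i j| with hC
  have hsmul_abs : ∀ t : ℝ, ∑ i, ∑ j, |(Z + t • H) i j - Z i j| = |t| * C := by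
    intro t
    rw [hC, Finset.mul_sum]
    refine Finset.sum_congr rfl fun i _ => ?_
    rw [Finset.mul_sum]
    refine Finset.sum_congr rfl fun j _ => ?_
    rw [Matrix.add_apply, Matrix.smul_apply, add_sub_cancel_left, smul_eq_mul, abs_mul]
  have hlip : ∀ t : ℝ, |projMax κ (Z + t • H) - projMax κ Z| ≤ |t| * C := by
    intro t
    rw [abs_le]
    constructor
    · have h1 := projMax_sub_le hκp Z (Z + t • H)
      have h2 : ∑ i, ∑ j, |Z i j - (Z + t • H) i j| = |t| * C := by
        rw [← hsmul_abs t]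
        exact Finset.sum_congr rfl fun i _ => Finset.sum_congr rfl fun j _ => abs_sub_comm _ _
      linarith [h1, h2]
    · have h1 := projMax_sub_le hκp (Z + t • H) Z
      linarith [h1, hsmul_abs t]
  have main : Filter.Tendsto
      (fun t : ℝ => (kyFanEig κ (Z + t • H) - kyFanEig κ Z) / t)
      (nhdsWithin (0 : ℝ) (Set.Ioi 0)) (nhds L) := by
    rw [Metric.tendsto_nhds]
    intro ε hε
    have hlow : ∀ᶠ t in nhdsWithin (0:ℝ) (Set.Ioi 0),
        L ≤ (kyFanEig κ (Z + t • H) - kyFanEig κ Z) / t := by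
      filter_upwards [eventually_mem_nhdsWithin] with t ht
      rw [Set.mem_Ioi] at ht
      rw [le_div_iff₀ ht]
      have h1 : ((Z + t • H) * P₀).trace ≤ kyFanEig κ (Z + t • H) := by
        rw [hΦ t]; exact le_projMax hP₀mem _
      have h2 : ((Z + t • H) * P₀).trace = (Z * P₀).trace + t * L := by
        rw [Matrix.add_mul, Matrix.trace_add, Matrix.smul_mul, Matrix.trace_smul, hL,
          smul_eq_mul]
      have h3 : (Z * P₀).trace = kyFanEig κ Z := by
        rw [hΦZ, hPMZ, hZ]
        exact hP₀Z
      have h4 : L * t = t * L := mul_comm _ _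
      linarith [h1, h2, h3, h4]
    have hupp : ∀ᶠ t in nhdsWithin (0:ℝ) (Set.Ioi 0),
        (kyFanEig κ (Z + t • H) - kyFanEig κ Z) / t < L + ε := by
      by_contra hcon
      rw [Filter.not_eventually] at hcon
      have hcon2 : ∃ᶠ t in nhdsWithin (0:ℝ) (Set.Ioi 0),
          L + ε ≤ (kyFanEig κ (Z + t • H) - kyFanEig κ Z) / t :=
        hcon.mono fun t ht => not_lt.mp ht
      have hFne := Filter.frequently_iff_neBot.mp hcon2
      obtain ⟨u, hu⟩ := Filter.exists_seq_tendsto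
        ((nhdsWithin (0:ℝ) (Set.Ioi 0)) ⊓ Filter.principal
          {t : ℝ | L + ε ≤ (kyFanEig κ (Z + t • H) - kyFanEig κ Z) / t})
      have hu0 : Filter.Tendsto u Filter.atTop (nhdsWithin (0:ℝ) (Set.Ioi 0)) :=
        hu.mono_right inf_le_left
      have hupos : ∀ᶠ n in Filter.atTop, u n ∈ Set.Ioi (0:ℝ) :=
        hu0.eventually eventually_mem_nhdsWithin
      have hularge : ∀ᶠ n in Filter.atTop,
          L + ε ≤ (kyFanEig κ (Z + u n • H) - kyFanEig κ Z) / (u n) := by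
        have h5 : ∀ᶠ n in Filter.atTop, u n ∈
            {t : ℝ | L + ε ≤ (kyFanEig κ (Z + t • H) - kyFanEig κ Z) / t} :=
          Filter.tendsto_principal.mp (hu.mono_right inf_le_right)
        filter_upwards [h5] with n hn
        exact hn
      have hu00 : Filter.Tendsto u Filter.atTop (nhds 0) := hu0.mono_right nhdsWithin_le_nhds
      have hattain := fun n => exists_attain (hsymms (u n)) hκ1 hκp
      choose Pn hPn hPnt using hattain
      have hmaple : Filter.map Pn Filter.atTop ≤ Filter.principal (projSet κ p) := by
        rw [Filter.le_principal_iff, Filter.mem_map]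
        exact Filter.Eventually.of_forall fun n => hPn n
      obtain ⟨A, hAmem, hAcl⟩ := projSet_isCompact hmaple
      have hHtr_bdd : ∀ n, |(H * Pn n).trace| ≤ C := fun n => trace_mul_abs_le (hPn n) H
      have htrZ : ∀ n, (Z * Pn n).trace
          = projMax κ (Z + u n • H) - u n * (H * Pn n).trace := by
        intro n
        have h2 : ((Z + u n • H) * Pn n).trace
            = (Z * Pn n).trace + u n * (H * Pn n).trace := by
          rw [Matrix.add_mul, Matrix.trace_add, Matrix.smul_mul, Matrix.trace_smul, smul_eq_mul]
        rw [← hPnt n, h2]; ring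
      have habs0 : Filter.Tendsto (fun n => |u n| * C) Filter.atTop (nhds 0) := by
        have := (hu00.abs).mul_const C
        simpa using this
      have hPMlim : Filter.Tendsto (fun n => projMax κ (Z + u n • H)) Filter.atTop
          (nhds (projMax κ Z)) := by
        rw [tendsto_iff_dist_tendsto_zero]
        refine tendsto_of_tendsto_of_tendsto_of_le_of_le tendsto_const_nhds habs0
          (fun n => dist_nonneg) fun n => ?_
        rw [Real.dist_eq]
        exact hlip (u n)
      have huH0 : Filter.Tendsto (fun n => u n * (H * Pn n).trace) Filter.atTop (nhds 0) := by
        rw [tendsto_iff_dist_tendsto_zero]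
        refine tendsto_of_tendsto_of_tendsto_of_le_of_le tendsto_const_nhds habs0
          (fun n => dist_nonneg) fun n => ?_
        rw [Real.dist_eq, sub_zero, abs_mul]
        exact mul_le_mul_of_nonneg_left (hHtr_bdd n) (abs_nonneg _)
      have hZlim : Filter.Tendsto (fun n => (Z * Pn n).trace) Filter.atTop
          (nhds (projMax κ Z)) := by
        have heq : (fun n => (Z * Pn n).trace)
            = fun n => projMax κ (Z + u n • H) - u n * (H * Pn n).trace := funext htrZ
        rw [heq]
        simpa using hPMlim.sub huH0
      have hgZcont : Continuous (fun P : Matrix (Fin p) (Fin p) ℝ => (Z * P).trace) :=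
        (continuous_const.matrix_mul continuous_id).matrix_trace
      have hgHcont : Continuous (fun P : Matrix (Fin p) (Fin p) ℝ => (H * P).trace) :=
        (continuous_const.matrix_mul continuous_id).matrix_trace
      have hclZ : ClusterPt ((Z * A).trace)
          (Filter.map (fun n => (Z * Pn n).trace) Filter.atTop) := by
        have h5 := clusterPt_map hAcl hgZcont
        rwa [Filter.map_map] at h5
      have hZA : (Z * A).trace = projMax κ Z := clusterPt_eq_of_tendsto hclZ hZlim
      have hclH : ClusterPt ((H * A).trace)
          (Filter.map (fun n => (H * Pn n).trace) Filter.atTop) := by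
        have h5 := clusterPt_map hAcl hgHcont
        rwa [Filter.map_map] at h5
      have hHn : ∀ᶠ n in Filter.atTop, L + ε ≤ (H * Pn n).trace := by
        filter_upwards [hupos, hularge] with n hn1 hn2
        rw [Set.mem_Ioi] at hn1
        have h5 : (Z * Pn n).trace ≤ projMax κ Z := le_projMax (hPn n) Z
        have h6 : (kyFanEig κ (Z + u n • H) - kyFanEig κ Z) / (u n)
            = ((Z * Pn n).trace + u n * (H * Pn n).trace - projMax κ Z) / (u n) := by
          rw [hΦ (u n), hΦZ, ← hPnt n]
          congr 1
          rw [Matrix.add_mul, Matrix.trace_add, Matrix.smul_mul, Matrix.trace_smul, smul_eq_mul]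
        rw [h6, le_div_iff₀ hn1] at hn2
        have h8 : (L + ε) * u n ≤ ((H * Pn n).trace) * (u n) := by
          linarith [hn2, h5, mul_comm (u n) ((H * Pn n).trace)]
        exact le_of_mul_le_mul_right h8 hn1
      have hHA : L + ε ≤ (H * A).trace := by
        have hmem : {x : ℝ | L + ε ≤ x}
            ∈ Filter.map (fun n => (H * Pn n).trace) Filter.atTop := Filter.mem_map.mpr hHn
        have h7 : ClusterPt ((H * A).trace) (Filter.principal {x : ℝ | L + ε ≤ x}) :=
          hclH.mono (Filter.le_principal_iff.mpr hmem)
        have h8 : (H * A).trace ∈ closure {x : ℝ | L + ε ≤ x} :=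
          mem_closure_iff_clusterPt.mpr h7
        rwa [show {x : ℝ | L + ε ≤ x} = Set.Ici (L + ε) from rfl, closure_Ici,
          Set.mem_Ici] at h8
      have hbound : (H * A).trace ≤ L := by
        rw [hP₀H]
        refine maximizer_trace_le hκ1 hκp Q μ hQ hμ H hH hAmem ?_
        rw [← hZ, hZA, hPMZ]
      linarith [hHA, hbound, hε]
    filter_upwards [hlow, hupp] with t h1 h2
    rw [Real.dist_eq, abs_lt]
    constructor <;> linarith
  rw [hP₀H] at main
  exact main
end

section
/- Let φ : X → ℝ be twice continuously differentiable with ∇²φ positive semidefinite on an open neighborhood N of x̄, and let g : X → ℝ ∪ {+∞} be proper lsc convex; set f = φ + g. If x̄ is a local minimizer of f that fails the condition: for all sequences (x^k, v^k) ∈ gph ∂f with x^k ∈ N, (x^k, v^k) → (x̄, 0), and unit vectors w^k → w with ⟨w^k, ∇²φ(x^k)w^k⟩ + d²g(x^k | v^k − ∇φ(x^k))(w^k) < (1/k), then the limit w satisfies both ∇²φ(x̄)w = 0 and there exist (x^k, y^k) ∈ gph ∂g, w^k → w with (x^k, y^k) → (x̄, −∇φ(x̄)) and d²g(x^k|y^k)(w^k)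 → 0. -/
open Filter Topology

/-- The second subderivative of `g` at `x` for `v`, evaluated at `w`. -/
noncomputable def secondSubderiv {X : Type*} [NormedAddCommGroup X] [InnerProductSpace ℝ X]
    (g : X → EReal) (x v w : X) : EReal :=
  Filter.liminf
    (fun p : ℝ × X =>
      ((2 / p.1 ^ 2 : ℝ) : EReal) *
        (g (x + p.1 • p.2) - g x - ((p.1 * (inner ℝ v p.2 : ℝ) : ℝ) : EReal)))
    ((nhdsWithin (0 : ℝ) (Set.Ioi 0)) ×ˢ (nhds w))

/-- The convex-analysis subdifferential of `g` at `x`. -/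
def convexSubdiff {X : Type*} [NormedAddCommGroup X] [InnerProductSpace ℝ X]
    (g : X → EReal) (x : X) : Set X :=
  { v | ∀ y, g x + ((inner ℝ v (y - x) : ℝ) : EReal) ≤ g y }

lemma ereal_mul_nonneg {a b : EReal} (ha : 0 ≤ a) (hb : 0 ≤ b) : 0 ≤ a * b := by
  rcases ha.lt_or_eq with h | h
  · rcases hb.lt_or_eq with h' | h'
    · exact (EReal.mul_pos h h').le
    · simp [← h']
  · simp [← h]

-- nonnegativity of the second subderivative at a subgradient
lemma secondSubderiv_nonneg' {X : Type*} [NormedAddCommGroup X] [InnerProductSpace ℝ X]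
    (g : X → EReal) (hg_nebot : ∀ y, g y ≠ ⊥) (hg_netop : ∃ y, g y ≠ ⊤)
    (x v w : X) (hv : ∀ y, g x + ((inner ℝ v (y - x) : ℝ) : EReal) ≤ g y) :
    0 ≤ secondSubderiv g x v w := by
  unfold secondSubderiv
  obtain ⟨y0, hy0⟩ := hg_netop
  have hgx_top : g x ≠ ⊤ := by
    intro h
    have h2 := hv y0
    rw [h, EReal.top_add_of_ne_bot (by simp)] at h2
    exact hy0 (top_le_iff.1 h2)
  obtain ⟨r, hr⟩ : ∃ r : ℝ, g x = (r : EReal) :=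
    ⟨(g x).toReal, (EReal.coe_toReal hgx_top (hg_nebot x)).symm⟩
  apply Filter.le_liminf_of_le (by isBoundedDefault)
  have hev : ∀ᶠ p : ℝ × X in (nhdsWithin (0:ℝ) (Set.Ioi 0)) ×ˢ nhds w, 0 < p.1 :=
    Filter.Eventually.prod_inl (eventually_mem_nhdsWithin) _
  filter_upwards [hev] with p hp
  apply ereal_mul_nonneg
  · exact EReal.coe_nonneg.2 (by positivity)
  · have hsub := hv (x + p.1 • p.2)
    rw [hr] at hsub ⊢
    rw [add_sub_cancel_left, real_inner_smul_right] at hsub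
    rw [EReal.le_sub_iff_add_le (Or.inl (EReal.coe_ne_bot _)) (Or.inl (EReal.coe_ne_top _)),
      zero_add,
      EReal.le_sub_iff_add_le (Or.inl (EReal.coe_ne_bot _)) (Or.inl (EReal.coe_ne_top _))]
    calc ((p.1 * inner ℝ v p.2 : ℝ) : EReal) + (r : EReal)
        = (r : EReal) + ((p.1 * inner ℝ v p.2 : ℝ) : EReal) := add_comm _ _
      _ ≤ g (x + p.1 • p.2) := hsub

lemma quad_zero {c d : ℝ} (hd : 0 ≤ d) (h : ∀ t : ℝ, 0 ≤ 2 * t * c + t ^ 2 * d) :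
    c = 0 := by
  set t := -c / (d + 1) with ht
  have hdpos : (0:ℝ) < d + 1 := by linarith
  have htc : t * (d + 1) = -c := by rw [ht]; field_simp
  have h2 : 0 ≤ (2 * t * c + t ^ 2 * d) * (d + 1) ^ 2 :=
    mul_nonneg (h t) (by positivity)
  have h3 : (2 * t * c + t ^ 2 * d) * (d + 1) ^ 2 = -(c ^ 2) * (d + 2) := by
    calc (2 * t * c + t ^ 2 * d) * (d + 1) ^ 2
        = 2 * (t * (d + 1)) * c * (d + 1) + (t * (d + 1)) ^ 2 * d := by ring
      _ = 2 * (-c) * c * (d + 1) + (-c) ^ 2 * d := by rw [htc]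
      _ = -(c ^ 2) * (d + 2) := by ring
  have hc2 : c ^ 2 = 0 := by nlinarith [sq_nonneg c]
  exact sq_eq_zero_iff.1 hc2

/-- Let `f = φ + g` with `φ` C², `∇²φ ⪰ 0` on an open neighborhood `N` of a local minimizer
`x̄`, and `g` proper lsc convex.  For any sequences `(xᵏ, vᵏ) ∈ gph ∂f` with `xᵏ ∈ N`,
`(xᵏ, vᵏ) → (x̄, 0)`, and unit vectors `wᵏ → w` with
`⟪wᵏ, ∇²φ(xᵏ)wᵏ⟫ + d²g(xᵏ | vᵏ − ∇φ(xᵏ))(wᵏ) < 1/k`, the limit `w` lies in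
`Ker ∇²φ(x̄)` and there are sequences witnessing `w ∈ 𝓦`, i.e. `(xᵏ, yᵏ) ∈ gph ∂g` and
`wᵏ → w` with `(xᵏ, yᵏ) → (x̄, −∇φ(x̄))` and `d²g(xᵏ|yᵏ)(wᵏ) → 0`. -/
theorem limit_in_kernel_and_W
    {X : Type*} [NormedAddCommGroup X] [InnerProductSpace ℝ X] [FiniteDimensional ℝ X]
    (φ : X → ℝ) (hφ : ContDiff ℝ 2 φ)
    (g : X → EReal) (hg_lsc : LowerSemicontinuous g)
    (hg_nebot : ∀ y, g y ≠ ⊥) (hg_netop : ∃ y, g y ≠ ⊤)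
    (hg_conv : ∀ x y : X, ∀ t : ℝ, 0 ≤ t → t ≤ 1 →
      g (t • x + (1 - t) • y) ≤ (t : EReal) * g x + ((1 - t : ℝ) : EReal) * g y)
    (xbar : X) (N : Set X) (hNopen : IsOpen N) (hxN : xbar ∈ N)
    (hpsd : ∀ x ∈ N, ∀ u : X, 0 ≤ iteratedFDeriv ℝ 2 φ x ![u, u])
    (hmin : IsLocalMin (fun y => (φ y : EReal) + g y) xbar)
    (xk vk wk : ℕ → X) (w : X)
    (hxkN : ∀ k, xk k ∈ N)
    (hgraph : ∀ k, vk k - gradient φ (xk k) ∈ convexSubdiff g (xk k))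
    (hxk : Filter.Tendsto xk atTop (nhds xbar))
    (hvk : Filter.Tendsto vk atTop (nhds (0 : X)))
    (hwk_norm : ∀ k, ‖wk k‖ = 1)
    (hwk : Filter.Tendsto wk atTop (nhds w))
    (hlt : ∀ k : ℕ,
      ((iteratedFDeriv ℝ 2 φ (xk k) ![wk k, wk k] : ℝ) : EReal)
          + secondSubderiv g (xk k) (vk k - gradient φ (xk k)) (wk k)
        < ((1 / ((k : ℝ) + 1) : ℝ) : EReal)) :
    (∀ u : X, iteratedFDeriv ℝ 2 φ xbar ![w, u] = 0) ∧
    ∃ x' y' w' : ℕ → X,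
      (∀ k, y' k ∈ convexSubdiff g (x' k)) ∧
      Filter.Tendsto x' atTop (nhds xbar) ∧
      Filter.Tendsto y' atTop (nhds (-gradient φ xbar)) ∧
      Filter.Tendsto w' atTop (nhds w) ∧
      Filter.Tendsto (fun k => secondSubderiv g (x' k) (y' k) (w' k)) atTop
        (nhds (0 : EReal)) := by
  set A : ℕ → ℝ := fun k => iteratedFDeriv ℝ 2 φ (xk k) ![wk k, wk k] with hA
  set D : ℕ → EReal := fun k => secondSubderiv g (xk k) (vk k - gradient φ (xk k)) (wk k) with hD
  have hD0 : ∀ k, 0 ≤ D k := fun k =>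
    secondSubderiv_nonneg' g hg_nebot hg_netop _ _ _ (hgraph k)
  have hA0 : ∀ k, 0 ≤ A k := fun k => hpsd (xk k) (hxkN k) (wk k)
  have hDlt : ∀ k, D k < ((1 / ((k : ℝ) + 1) : ℝ) : EReal) := fun k =>
    lt_of_le_of_lt (by
      calc D k = 0 + D k := (zero_add _).symm
        _ ≤ ((A k : ℝ) : EReal) + D k :=
          add_le_add_left (EReal.coe_nonneg.2 (hA0 k)) _) (hlt k)
  have hAlt : ∀ k, A k < 1 / ((k : ℝ) + 1) := fun k => by
    have : ((A k : ℝ) : EReal) < ((1 / ((k : ℝ) + 1) : ℝ) : EReal) :=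
      lt_of_le_of_lt (by
        calc ((A k : ℝ) : EReal) = ((A k : ℝ) : EReal) + 0 := (add_zero _).symm
          _ ≤ ((A k : ℝ) : EReal) + D k := add_le_add_right (hD0 k) _) (hlt k)
    exact EReal.coe_lt_coe_iff.1 this
  have hone : Filter.Tendsto (fun k : ℕ => 1 / ((k : ℝ) + 1)) atTop (nhds 0) :=
    tendsto_one_div_add_atTop_nhds_zero_nat
  -- second derivative bilinear form at xbar
  set B := fderiv ℝ (fderiv ℝ φ) xbar with hBdef
  have h2iter : ∀ x : X, ∀ u v : X,
      iteratedFDeriv ℝ 2 φ x ![u, v] = fderiv ℝ (fderiv ℝ φ) x u v := by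
    intro x u v
    rw [iteratedFDeriv_two_apply]
    simp
  have hsymm : IsSymmSndFDerivAt ℝ φ xbar :=
    hφ.contDiffAt.isSymmSndFDerivAt (by norm_num)
  have hPSDbar : ∀ u : X, 0 ≤ B u u := fun u => by
    have := hpsd xbar hxN u
    rwa [h2iter] at this
  -- continuity of the second derivative
  have hC1 : Continuous (fderiv ℝ (fderiv ℝ φ)) :=
    (hφ.fderiv_right (m := 1) (by norm_num)).continuous_fderiv one_ne_zero
  have hcont : Continuous (fun p : X × X => fderiv ℝ (fderiv ℝ φ) p.1 p.2 p.2) :=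
    ((hC1.comp continuous_fst).clm_apply continuous_snd).clm_apply continuous_snd
  have hTA : Filter.Tendsto A atTop (nhds (B w w)) := by
    have := (hcont.tendsto (xbar, w)).comp (hxk.prodMk_nhds hwk)
    convert this using 1
    funext k
    exact h2iter (xk k) (wk k) (wk k)
  have hBww_le : B w w ≤ 0 := le_of_tendsto_of_tendsto' hTA hone fun k => (hAlt k).le
  have hBww : B w w = 0 := le_antisymm hBww_le (hPSDbar w)
  constructor
  · intro u
    rw [h2iter]
    have hd0 : 0 ≤ B u u := hPSDbar u
    have key : ∀ t : ℝ, 0 ≤ 2 * t * (B w u) + t ^ 2 * (B u u) := by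
      intro t
      have h := hPSDbar (w + t • u)
      have hexp : B (w + t • u) (w + t • u)
          = B w w + t * B w u + t * B u w + t ^ 2 * B u u := by
        simp only [map_add, map_smul, ContinuousLinearMap.add_apply,
          ContinuousLinearMap.smul_apply, smul_eq_mul]
        ring
      have hsw : B u w = B w u := hsymm u w
      rw [hexp, hBww, hsw] at h
      linarith
    exact quad_zero hd0 key
  · refine ⟨xk, fun k => vk k - gradient φ (xk k), wk, hgraph, hxk, ?_, hwk, ?_⟩
    · have hgrad_cont : Continuous (gradient φ) := by
        have h1 : Continuous (fderiv ℝ φ) := hφ.continuous_fderiv (by norm_num)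
        have : Continuous fun x => (InnerProductSpace.toDual ℝ X).symm (fderiv ℝ φ x) :=
          (InnerProductSpace.toDual ℝ X).symm.continuous.comp h1
        exact this
      have : Filter.Tendsto (fun k => vk k - gradient φ (xk k)) atTop
          (nhds (0 - gradient φ xbar)) :=
        hvk.sub ((hgrad_cont.tendsto xbar).comp hxk)
      simpa using this
    · have hub : Filter.Tendsto (fun k : ℕ => ((1 / ((k : ℝ) + 1) : ℝ) : EReal)) atTop
          (nhds (0 : EReal)) := by
        have := EReal.tendsto_coe.2 hone
        simpa using this
      exact tendsto_of_tendsto_of_tendsto_of_le_of_le tendsto_const_nhds hub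
        hD0 (fun k => (hDlt k).le)
end
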